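/- Paturi's extrapolation lemma: if p is a real polynomial of degree at most r and |p(x)| ≤ Δ for all x with |x| ≤ ε (where 0 < ε ≤ 1), then |p(1)| ≤ Δ · e^{2r(1+1/ε)}. -/

import Mathlib

open Finset Polynomial

private lemma paturi_prod_abs (r i : ℕ) (hi : i ≤ r) :
    ∏ j ∈ (Finset.range (r+1)).erase i, |(i:ℝ) - (j:ℝ)|
      = (Nat.factorial i : ℝ) * (Nat.factorial (r - i) : ℝ) := by
  have hsplit : (Finset.range (r+1)).erase i
      = Finset.range i ∪ Finset.Ico (i+1) (r+1) := by
    ext j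
    simp only [Finset.mem_erase, Finset.mem_range, Finset.mem_union, Finset.mem_Ico]
    omega
  have hdisj : Disjoint (Finset.range i) (Finset.Ico (i+1) (r+1)) := by
    simp only [Finset.disjoint_left, Finset.mem_range, Finset.mem_Ico]
    omega
  rw [hsplit, Finset.prod_union hdisj]
  have h1 : ∏ j ∈ Finset.range i, |(i:ℝ) - (j:ℝ)| = (Nat.factorial i : ℝ) := by
    have hc : ∀ j ∈ Finset.range i, |(i:ℝ) - (j:ℝ)| = ((i - j : ℕ) : ℝ) := by
      intro j hj
      have hj' : j < i := Finset.mem_range.mp hj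
      rw [Nat.cast_sub hj'.le, abs_of_nonneg]
      have : (j:ℝ) < (i:ℝ) := by exact_mod_cast hj'
      linarith
    rw [Finset.prod_congr rfl hc, ← Nat.cast_prod]
    congr 1
    calc ∏ j ∈ Finset.range i, (i - j)
        = ∏ j ∈ Finset.range i, (i - (i - 1 - j)) := (Finset.prod_range_reflect _ _).symm
      _ = ∏ j ∈ Finset.range i, (j + 1) := by
          refine Finset.prod_congr rfl fun j hj => ?_
          have := Finset.mem_range.mp hj
          omega
      _ = Nat.factorial i := Finset.prod_range_add_one_eq_factorial i
  have h2 : ∏ j ∈ Finset.Ico (i+1) (r+1), |(i:ℝ) - (j:ℝ)| = (Nat.factorial (r-i) : ℝ) := by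
    have hc : ∀ j ∈ Finset.Ico (i+1) (r+1), |(i:ℝ) - (j:ℝ)| = ((j - i : ℕ) : ℝ) := by
      intro j hj
      have hj' := Finset.mem_Ico.mp hj
      rw [Nat.cast_sub (by omega), abs_sub_comm, abs_of_nonneg]
      have : (i:ℝ) < (j:ℝ) := by exact_mod_cast (by omega : i < j)
      linarith
    rw [Finset.prod_congr rfl hc, ← Nat.cast_prod]
    congr 1
    rw [Finset.prod_Ico_eq_prod_range]
    have hc2 : ∀ j ∈ Finset.range (r + 1 - (i+1)), (i + 1 + j - i) = j + 1 := by
      intro j _; omega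
    rw [Finset.prod_congr rfl hc2, Finset.prod_range_add_one_eq_factorial]
    congr 1; omega
  rw [h1, h2]

/-- Paturi's extrapolation lemma: if `p` is a real polynomial of degree at most `r` with
`|p(x)| ≤ Δ` for all `|x| ≤ ε` (where `0 < ε ≤ 1`), then `|p(1)| ≤ Δ · e^{2r(1+1/ε)}`. -/
theorem paturi_extrapolation (p : Polynomial ℝ) (r : ℕ) (hdeg : p.natDegree ≤ r)
    (Δ ε : ℝ) (hΔ : 0 ≤ Δ) (hε : ε ∈ Set.Ioc (0 : ℝ) 1)
    (hbound : ∀ x : ℝ, |x| ≤ ε → |p.eval x| ≤ Δ) :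
    |p.eval 1| ≤ Δ * Real.exp (2 * r * (1 + 1 / ε)) := by
  obtain ⟨hε0, hε1⟩ := hε
  rcases Nat.eq_zero_or_pos r with hr | hr
  · subst hr
    have hp : p = Polynomial.C (p.coeff 0) := Polynomial.eq_C_of_natDegree_le_zero hdeg
    have h0 := hbound 0 (by simpa using hε0.le)
    have hpe : p.eval 1 = p.eval 0 := by
      conv_lhs => rw [hp]
      conv_rhs => rw [hp]
      simp
    rw [hpe]
    simpa using h0
  · have hrR : (0:ℝ) < r := by exact_mod_cast hr
    set v : ℕ → ℝ := fun i => ε * i / r with hv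
    have hvinj : Set.InjOn v (Finset.range (r+1) : Set ℕ) := by
      intro a _ b _ hab
      simp only [hv] at hab
      field_simp at hab
      exact_mod_cast hab
    have hv0 : ∀ j : ℕ, j ≤ r → 0 ≤ v j ∧ v j ≤ ε := by
      intro j hj
      constructor
      · positivity
      · rw [hv]
        have hjr : (j:ℝ) ≤ r := by exact_mod_cast hj
        rw [div_le_iff₀ hrR]
        nlinarith
    have hdiff : ∀ i j : ℕ, |v i - v j| = ε / r * |(i:ℝ) - j| := by
      intro i j
      have : v i - v j = ε / r * ((i:ℝ) - j) := by
        simp only [hv]; field_simp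
      rw [this, abs_mul, abs_of_pos (by positivity : (0:ℝ) < ε / r)]
    have hdeg' : p.degree < ((Finset.range (r+1)).card : WithBot ℕ) := by
      rw [Finset.card_range]
      calc p.degree ≤ (p.natDegree : WithBot ℕ) := Polynomial.degree_le_natDegree
        _ < ((r+1 : ℕ) : WithBot ℕ) := by exact_mod_cast Nat.lt_succ_of_le hdeg
    have hinterp := Lagrange.eq_interpolate hvinj hdeg'
    have heval : p.eval 1 = ∑ i ∈ Finset.range (r+1),
        p.eval (v i) * (Lagrange.basis (Finset.range (r+1)) v i).eval 1 := by
      conv_lhs => rw [hinterp]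
      rw [Lagrange.interpolate_apply, Polynomial.eval_finset_sum]
      simp [Polynomial.eval_mul]
    have hbasis : ∀ i ∈ Finset.range (r+1),
        |(Lagrange.basis (Finset.range (r+1)) v i).eval 1|
          ≤ ((r:ℝ)/ε)^r / ((Nat.factorial i : ℝ) * (Nat.factorial (r-i) : ℝ)) := by
      intro i hi
      have hir : i ≤ r := Nat.lt_succ_iff.mp (Finset.mem_range.mp hi)
      rw [Lagrange.basis, Polynomial.eval_prod, Finset.abs_prod]
      have hstep : ∀ j ∈ (Finset.range (r+1)).erase i,
          |(Lagrange.basisDivisor (v i) (v j)).eval 1| ≤ ((r:ℝ)/ε) * |(i:ℝ) - j|⁻¹ := by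
        intro j hj
        obtain ⟨hji, hjm⟩ := Finset.mem_erase.mp hj
        have hjr : j ≤ r := Nat.lt_succ_iff.mp (Finset.mem_range.mp hjm)
        obtain ⟨hvj0, hvjε⟩ := hv0 j hjr
        have habs1 : |1 - v j| ≤ 1 := by
          rw [abs_of_nonneg (by linarith)]; linarith
        have heq : (Lagrange.basisDivisor (v i) (v j)).eval 1
            = (v i - v j)⁻¹ * (1 - v j) := by
          simp [Lagrange.basisDivisor]
        rw [heq, abs_mul, abs_inv, hdiff i j]
        have hij : (i:ℝ) ≠ j := by
          intro h
          exact hji (by exact_mod_cast h.symm)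
        have hd0 : (0:ℝ) < |(i:ℝ) - j| := abs_pos.mpr (sub_ne_zero.mpr hij)
        rw [mul_inv, mul_comm ((ε/r)⁻¹) _]
        have hinv : (ε / (r:ℝ))⁻¹ = (r:ℝ)/ε := by
          rw [inv_div]
        rw [hinv]
        calc |(i:ℝ) - j|⁻¹ * ((r:ℝ)/ε) * |1 - v j|
            ≤ |(i:ℝ) - j|⁻¹ * ((r:ℝ)/ε) * 1 := by
              apply mul_le_mul_of_nonneg_left habs1 (by positivity)
          _ = (r:ℝ)/ε * |(i:ℝ) - j|⁻¹ := by ring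
      calc ∏ j ∈ (Finset.range (r+1)).erase i,
              |(Lagrange.basisDivisor (v i) (v j)).eval 1|
          ≤ ∏ j ∈ (Finset.range (r+1)).erase i, ((r:ℝ)/ε) * |(i:ℝ) - j|⁻¹ :=
            Finset.prod_le_prod (fun j _ => abs_nonneg _) hstep
        _ = ((r:ℝ)/ε)^r * (∏ j ∈ (Finset.range (r+1)).erase i, |(i:ℝ) - j|)⁻¹ := by
            rw [Finset.prod_mul_distrib, Finset.prod_const, ← Finset.prod_inv_distrib,
              Finset.card_erase_of_mem hi, Finset.card_range]
            norm_num
        _ = ((r:ℝ)/ε)^r / ((Nat.factorial i : ℝ) * (Nat.factorial (r-i) : ℝ)) := by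
            rw [paturi_prod_abs r i hir]
            ring
    have hsum : ∑ i ∈ Finset.range (r+1),
        (1:ℝ) / ((Nat.factorial i : ℝ) * (Nat.factorial (r-i) : ℝ))
          = 2^r / (Nat.factorial r : ℝ) := by
      have hterm : ∀ i ∈ Finset.range (r+1),
          (1:ℝ) / ((Nat.factorial i : ℝ) * (Nat.factorial (r-i) : ℝ))
            = (r.choose i : ℝ) / (Nat.factorial r : ℝ) := by
        intro i hi
        have hir : i ≤ r := Nat.lt_succ_iff.mp (Finset.mem_range.mp hi)
        have key : r.choose i * Nat.factorial i * Nat.factorial (r-i) = Nat.factorial r :=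
          Nat.choose_mul_factorial_mul_factorial hir
        rw [div_eq_div_iff (by positivity) (by positivity), one_mul]
        rw [← key]
        push_cast
        ring
      rw [Finset.sum_congr rfl hterm, ← Finset.sum_div]
      congr 1
      rw [← Nat.cast_sum, Nat.sum_range_choose]
      push_cast
      ring
    have hmain : |p.eval 1| ≤ Δ * (((r:ℝ)/ε)^r * (2^r / (Nat.factorial r : ℝ))) := by
      rw [heval]
      calc |∑ i ∈ Finset.range (r+1),
              p.eval (v i) * (Lagrange.basis (Finset.range (r+1)) v i).eval 1|
          ≤ ∑ i ∈ Finset.range (r+1),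
              |p.eval (v i) * (Lagrange.basis (Finset.range (r+1)) v i).eval 1| :=
            Finset.abs_sum_le_sum_abs _ _
        _ ≤ ∑ i ∈ Finset.range (r+1),
              Δ * (((r:ℝ)/ε)^r / ((Nat.factorial i : ℝ) * (Nat.factorial (r-i) : ℝ))) := by
            refine Finset.sum_le_sum fun i hi => ?_
            rw [abs_mul]
            have hir : i ≤ r := Nat.lt_succ_iff.mp (Finset.mem_range.mp hi)
            obtain ⟨hvi0, hviε⟩ := hv0 i hir
            have hb1 : |p.eval (v i)| ≤ Δ := hbound (v i) (by rwa [abs_of_nonneg hvi0])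
            exact mul_le_mul hb1 (hbasis i hi) (abs_nonneg _) hΔ
        _ = Δ * (((r:ℝ)/ε)^r *
              ∑ i ∈ Finset.range (r+1),
                (1:ℝ) / ((Nat.factorial i : ℝ) * (Nat.factorial (r-i) : ℝ))) := by
            rw [Finset.mul_sum, Finset.mul_sum]
            refine Finset.sum_congr rfl fun i _ => ?_
            ring
        _ = Δ * (((r:ℝ)/ε)^r * (2^r / (Nat.factorial r : ℝ))) := by rw [hsum]
    have hcomb : ((r:ℝ)/ε)^r * (2^r / (Nat.factorial r : ℝ))
        = (2*(r:ℝ)/ε)^r / (Nat.factorial r : ℝ) := by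
      field_simp
      ring
    have hx : (0:ℝ) ≤ 2*(r:ℝ)/ε := by positivity
    have hexp1 : (2*(r:ℝ)/ε)^r / (Nat.factorial r : ℝ) ≤ Real.exp (2*(r:ℝ)/ε) := by
      calc (2*(r:ℝ)/ε)^r / (Nat.factorial r : ℝ)
          ≤ ∑ i ∈ Finset.range (r+1), (2*(r:ℝ)/ε)^i / (Nat.factorial i : ℝ) := by
            refine Finset.single_le_sum (f := fun i => (2*(r:ℝ)/ε)^i / (Nat.factorial i : ℝ))
              (fun i _ => by positivity) (Finset.self_mem_range_succ r)
        _ ≤ Real.exp (2*(r:ℝ)/ε) := by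
            simpa using Real.sum_le_exp_of_nonneg hx (r+1)
    have hexp2 : Real.exp (2*(r:ℝ)/ε) ≤ Real.exp (2 * r * (1 + 1 / ε)) := by
      apply Real.exp_le_exp.mpr
      have h1 : 2 * (r:ℝ) * (1 + 1/ε) = 2*r + 2*r/ε := by ring
      rw [h1]
      linarith
    calc |p.eval 1| ≤ Δ * (((r:ℝ)/ε)^r * (2^r / (Nat.factorial r : ℝ))) := hmain
      _ = Δ * ((2*(r:ℝ)/ε)^r / (Nat.factorial r : ℝ)) := by rw [hcomb]
      _ ≤ Δ * Real.exp (2 * r * (1 + 1 / ε)) :=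
          mul_le_mul_of_nonneg_left (hexp1.trans hexp2) hΔ
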